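/- The following minimax interchange holds in the extended reals ℝ ∪ {−∞}: inf_{w ∈ K} sup_{τ ∈ T} inf_{β ∈ ℝ^p} Σᵢ wᵢ·ℓᵢ(τ,β) = inf_{w ∈ K} inf_{β ∈ ℝ^p} sup_{τ ∈ T} Σᵢ wᵢ·ℓᵢ(τ,β) = inf_{β ∈ ℝ^p} sup_{τ ∈ T} inf_{w ∈ K} Σᵢ wᵢ·ℓᵢ(τ,β). -/

import Mathlib

open Finset

noncomputable section

/-- The CoinDICE Lagrangian integrand `ℓᵢ(τ,β) = τᵢ·rᵢ + βᵀΔᵢ(τ)` with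
`Δᵢ(τ) = (1−γ)·uᵢ + τᵢ·vᵢ`. -/
def ell {n p : ℕ} (γ : ℝ) (r : Fin n → ℝ) (u v : Fin n → Fin p → ℝ)
    (τ : Fin n → ℝ) (β : Fin p → ℝ) (i : Fin n) : ℝ :=
  τ i * r i + ∑ j, β j * ((1 - γ) * u i j + τ i * v i j)

lemma clm_rep {ι : Type*} [Fintype ι] [DecidableEq ι] (f : (ι → ℝ) →L[ℝ] ℝ) (y : ι → ℝ) :
    f y = ∑ i, y i * f (fun j => if i = j then 1 else 0) := by
  conv_lhs => rw [pi_eq_sum_univ y]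
  rw [map_sum]
  simp [smul_eq_mul]

lemma ereal_le_coe_of_forall {x : EReal} {M : ℝ}
    (h : ∀ ε : ℝ, 0 < ε → x ≤ ((M + ε : ℝ) : EReal)) : x ≤ (M : EReal) := by
  by_contra hx
  push_neg at hx
  obtain ⟨z, hz1, hz2⟩ := EReal.exists_between_coe_real hx
  have hMz : M < z := EReal.coe_lt_coe_iff.1 hz1
  have h2 := h (z - M) (by linarith)
  rw [show M + (z - M) = z by ring] at h2
  exact absurd (h2.trans_lt hz2) (lt_irrefl x)

lemma ereal_eq_bot {x : EReal} (h : ∀ m : ℝ, x ≤ (m : EReal)) : x = ⊥ := by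
  by_contra hx
  obtain ⟨z, hz1, hz2⟩ := EReal.exists_between_coe_real (bot_lt_iff_ne_bot.mpr hx)
  exact absurd (h z) (not_le.mpr hz2)

lemma ell_eq {n p : ℕ} (γ : ℝ) (r : Fin n → ℝ) (u v : Fin n → Fin p → ℝ)
    (τ : Fin n → ℝ) (β : Fin p → ℝ) (i : Fin n) :
    ell γ r u v τ β i = τ i * (r i + ∑ j, β j * v i j) + (1 - γ) * ∑ j, β j * u i j := by
  have h : ∑ j, β j * ((1 - γ) * u i j + τ i * v i j)
      = τ i * (∑ j, β j * v i j) + (1 - γ) * ∑ j, β j * u i j := by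
    rw [Finset.mul_sum, Finset.mul_sum, ← Finset.sum_add_distrib]
    exact Finset.sum_congr rfl fun j _ => by ring
  simp only [ell]; rw [h]; ring

lemma hsum_eq {n p : ℕ} (γ : ℝ) (r : Fin n → ℝ) (u v : Fin n → Fin p → ℝ)
    (w τ : Fin n → ℝ) (β : Fin p → ℝ) :
    ∑ i, w i * ell γ r u v τ β i
      = (∑ i, w i * (τ i * r i)) + ∑ j, β j * (∑ i, w i * ((1 - γ) * u i j + τ i * v i j)) := by
  have h1 : ∀ i, w i * ell γ r u v τ β i
      = w i * (τ i * r i) + ∑ j, β j * (w i * ((1 - γ) * u i j + τ i * v i j)) := by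
    intro i; simp only [ell, mul_add, Finset.mul_sum]; congr 1
    exact Finset.sum_congr rfl fun j _ => by ring
  rw [Finset.sum_congr rfl fun i _ => h1 i, Finset.sum_add_distrib, Finset.sum_comm]
  congr 1
  exact Finset.sum_congr rfl fun j _ => (Finset.mul_sum _ _ _).symm

lemma eq1 {n p : ℕ} (γ : ℝ) (r : Fin n → ℝ) (u v : Fin n → Fin p → ℝ)
    (Tset : Set (Fin n → ℝ)) (hTne : Tset.Nonempty) (hTcpt : IsCompact Tset)
    (hTconv : Convex ℝ Tset) (w : Fin n → ℝ) :
    (⨆ τ ∈ Tset, ⨅ β : Fin p → ℝ, ((∑ i, w i * ell γ r u v τ β i : ℝ) : EReal)) =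
      ⨅ β : Fin p → ℝ, ⨆ τ ∈ Tset, ((∑ i, w i * ell γ r u v τ β i : ℝ) : EReal) := by
  set c : (Fin n → ℝ) → ℝ := fun τ => ∑ i, w i * (τ i * r i) with hc
  set amap : (Fin n → ℝ) → (Fin p → ℝ) :=
    fun τ j => ∑ i, w i * ((1 - γ) * u i j + τ i * v i j) with hamap
  have hsum : ∀ τ (β : Fin p → ℝ),
      (∑ i, w i * ell γ r u v τ β i) = c τ + ∑ j, β j * amap τ j :=
    fun τ β => hsum_eq γ r u v w τ β
  have hccont : Continuous c := by simp only [hc]; fun_prop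
  have hacont : Continuous amap := by
    simp only [hamap]; exact continuous_pi fun j => by fun_prop
  have haaffA : ∀ (τ1 τ2 : Fin n → ℝ) (a b : ℝ), a + b = 1 →
      amap (a • τ1 + b • τ2) = a • amap τ1 + b • amap τ2 := by
    intro τ1 τ2 a b hab
    funext j
    show (∑ i, w i * ((1 - γ) * u i j + (a • τ1 + b • τ2) i * v i j))
      = a * (∑ i, w i * ((1 - γ) * u i j + τ1 i * v i j))
        + b * (∑ i, w i * ((1 - γ) * u i j + τ2 i * v i j))
    rw [Finset.mul_sum, Finset.mul_sum, ← Finset.sum_add_distrib]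
    refine Finset.sum_congr rfl fun i _ => ?_
    simp only [Pi.add_apply, Pi.smul_apply, smul_eq_mul]
    linear_combination (-(w i * ((1 - γ) * u i j))) * hab
  have haaffC : ∀ (τ1 τ2 : Fin n → ℝ) (a b : ℝ),
      c (a • τ1 + b • τ2) = a * c τ1 + b * c τ2 := by
    intro τ1 τ2 a b
    show (∑ i, w i * ((a • τ1 + b • τ2) i * r i)) = a * (∑ i, _) + b * (∑ i, _)
    rw [Finset.mul_sum, Finset.mul_sum, ← Finset.sum_add_distrib]
    refine Finset.sum_congr rfl fun i _ => ?_
    simp only [Pi.add_apply, Pi.smul_apply, smul_eq_mul]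
    ring
  have heasy : (⨆ τ ∈ Tset, ⨅ β : Fin p → ℝ, ((∑ i, w i * ell γ r u v τ β i : ℝ) : EReal)) ≤
      ⨅ β : Fin p → ℝ, ⨆ τ ∈ Tset, ((∑ i, w i * ell γ r u v τ β i : ℝ) : EReal) :=
    le_iInf fun β => iSup₂_le fun τ hτ => (iInf_le _ β).trans (le_iSup₂_of_le τ hτ le_rfl)
  by_cases hS : ∃ τ₀ ∈ Tset, amap τ₀ = 0
  · -- feasible case
    obtain ⟨τ₀, hτ₀T, hτ₀a⟩ := hS
    set S : Set (Fin n → ℝ) := Tset ∩ amap ⁻¹' {0} with hSdef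
    have hScpt : IsCompact S := hTcpt.inter_right (isClosed_singleton.preimage hacont)
    have hSne : S.Nonempty := ⟨τ₀, hτ₀T, by simp [hτ₀a]⟩
    obtain ⟨τs, hτsS, hτsmax⟩ := hScpt.exists_isMaxOn hSne hccont.continuousOn
    set M := c τs with hM
    have hazero : amap τs = 0 := hτsS.2
    have hLB : (M : EReal) ≤
        ⨆ τ ∈ Tset, ⨅ β : Fin p → ℝ, ((∑ i, w i * ell γ r u v τ β i : ℝ) : EReal) := by
      refine le_iSup₂_of_le τs hτsS.1 (le_iInf fun β => ?_)
      have hval : (∑ i, w i * ell γ r u v τs β i) = M := by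
        rw [hsum τs β, hazero]
        simp [hM]
      rw [hval]
    have hUB : (⨅ β : Fin p → ℝ, ⨆ τ ∈ Tset, ((∑ i, w i * ell γ r u v τ β i : ℝ) : EReal))
        ≤ (M : EReal) := by
      apply ereal_le_coe_of_forall
      intro ε hε
      set D : Set ((Fin p → ℝ) × ℝ) := (fun τ => (amap τ, c τ)) '' Tset with hD
      have hDcpt : IsCompact D := hTcpt.image (hacont.prodMk hccont)
      have hDconv : Convex ℝ D := by
        rintro _ ⟨τ1, hτ1, rfl⟩ _ ⟨τ2, hτ2, rfl⟩ a b ha hb hab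
        refine ⟨a • τ1 + b • τ2, hTconv hτ1 hτ2 ha hb hab, ?_⟩
        have hrhs : (a • (amap τ1, c τ1) + b • (amap τ2, c τ2) : (Fin p → ℝ) × ℝ)
            = (a • amap τ1 + b • amap τ2, a * c τ1 + b * c τ2) := rfl
        rw [hrhs, Prod.mk.injEq]
        exact ⟨haaffA τ1 τ2 a b hab, haaffC τ1 τ2 a b⟩
      set Eset : Set ((Fin p → ℝ) × ℝ) := {x | x.1 = 0 ∧ M + ε ≤ x.2} with hE
      have hEc : IsClosed Eset := by
        have heq : Eset = {x : (Fin p → ℝ) × ℝ | x.1 = 0} ∩ {x | M + ε ≤ x.2} := rfl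
        rw [heq]
        exact (isClosed_eq continuous_fst continuous_const).inter
          (isClosed_le continuous_const continuous_snd)
      have hEconv : Convex ℝ Eset := by
        rintro x ⟨hx1, hx2⟩ y ⟨hy1, hy2⟩ a b ha hb hab
        constructor
        · show a • x.1 + b • y.1 = 0
          rw [hx1, hy1, smul_zero, smul_zero, add_zero]
        · show M + ε ≤ a * x.2 + b * y.2
          have h1 : a * (M + ε) ≤ a * x.2 := mul_le_mul_of_nonneg_left hx2 ha
          have h2 : b * (M + ε) ≤ b * y.2 := mul_le_mul_of_nonneg_left hy2 hb
          have h3 : a * (M + ε) + b * (M + ε) = M + ε := by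
            rw [← add_mul, hab, one_mul]
          linarith
      have hdisj : Disjoint D Eset := by
        rw [Set.disjoint_left]
        rintro _ ⟨τ, hτ, rfl⟩ ⟨h1, h2⟩
        have hτS : τ ∈ S := ⟨hτ, h1⟩
        have h4 : c τ ≤ M := hτsmax hτS
        simp only at h2
        linarith
      obtain ⟨f, u', v', hfu, huv, hfv⟩ :=
        geometric_hahn_banach_compact_closed hDconv hDcpt hEconv hEc hdisj
      set t0 := f (0, 1) with ht0
      have hEmem : ∀ s : ℝ, M + ε ≤ s → (((0 : Fin p → ℝ), s) : (Fin p → ℝ) × ℝ) ∈ Eset :=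
        fun s hs => ⟨rfl, hs⟩
      have hf0s : ∀ s : ℝ, f ((0 : Fin p → ℝ), s) = s * t0 := by
        intro s
        have h1 : (((0 : Fin p → ℝ), s) : (Fin p → ℝ) × ℝ)
            = s • (((0 : Fin p → ℝ), (1 : ℝ)) : (Fin p → ℝ) × ℝ) := by
          rw [Prod.smul_mk, smul_zero, smul_eq_mul, mul_one]
        rw [h1, map_smul, smul_eq_mul, ht0]
      have ht0pos : 0 < t0 := by
        by_contra hle
        push_neg at hle
        rcases lt_or_eq_of_le hle with hneg | heq
        · set s := max (M + ε) (v' / t0 + 1) with hs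
          have hs1 : M + ε ≤ s := le_max_left _ _
          have hv1 := hfv _ (hEmem s hs1)
          rw [hf0s] at hv1
          have hs2 : v' / t0 + 1 ≤ s := le_max_right _ _
          have h4 : v' / t0 < s := by linarith
          have h5 : s * t0 < v' :=
            calc s * t0 < (v' / t0) * t0 := mul_lt_mul_of_neg_right h4 hneg
              _ = v' := div_mul_cancel₀ _ (ne_of_lt hneg)
          linarith
        · have hd := hfu (amap τ₀, c τ₀) ⟨τ₀, hτ₀T, rfl⟩
          rw [hτ₀a, hf0s] at hd
          have he2 := hfv _ (hEmem (M + ε) le_rfl)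
          rw [hf0s] at he2
          rw [heq, mul_zero] at hd he2
          linarith
      set F1 := f.comp (ContinuousLinearMap.inl ℝ (Fin p → ℝ) ℝ) with hF1
      have hF1apply : ∀ z : Fin p → ℝ, F1 z = f (z, 0) := fun z => rfl
      have hsplit : ∀ (z : Fin p → ℝ) (s : ℝ), f (z, s) = F1 z + s * t0 := by
        intro z s
        have h1 : ((z, s) : (Fin p → ℝ) × ℝ)
            = (z, 0) + s • (((0 : Fin p → ℝ), (1 : ℝ)) : (Fin p → ℝ) × ℝ) := by
          rw [Prod.smul_mk, smul_zero, smul_eq_mul, mul_one, Prod.mk_add_mk, add_zero, zero_add]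
        rw [h1, map_add, map_smul, smul_eq_mul, ht0, hF1apply]
      set β : Fin p → ℝ := fun j => F1 (fun k => if j = k then 1 else 0) / t0 with hβ
      have hkey : ∀ τ ∈ Tset, c τ + ∑ j, β j * amap τ j < M + ε := by
        intro τ hτ
        have hd := hfu (amap τ, c τ) ⟨τ, hτ, rfl⟩
        rw [hsplit] at hd
        have he2 := hfv _ (hEmem (M + ε) le_rfl)
        rw [hf0s] at he2
        have hβsum : ∑ j, β j * amap τ j = F1 (amap τ) / t0 := by
          rw [clm_rep F1 (amap τ), Finset.sum_div]
          exact Finset.sum_congr rfl fun j _ => by rw [hβ]; ring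
        rw [hβsum]
        calc c τ + F1 (amap τ) / t0 = (c τ * t0 + F1 (amap τ)) / t0 := by field_simp
          _ < M + ε := (div_lt_iff₀ ht0pos).2 (by linarith)
      refine (iInf_le _ β).trans (iSup₂_le fun τ hτ => ?_)
      rw [hsum τ β]
      exact EReal.coe_le_coe_iff.2 (le_of_lt (hkey τ hτ))
    exact le_antisymm heasy (hUB.trans hLB)
  · -- infeasible case
    push_neg at hS
    have hLbot : (⨆ τ ∈ Tset, ⨅ β : Fin p → ℝ,
        ((∑ i, w i * ell γ r u v τ β i : ℝ) : EReal)) = ⊥ := by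
      refine le_bot_iff.1 (iSup₂_le fun τ hτ => ?_)
      refine le_bot_iff.2 (ereal_eq_bot fun m => ?_)
      have hne := hS τ hτ
      have hj0 : ∃ j0, amap τ j0 ≠ 0 := by
        by_contra hall; push_neg at hall; exact hne (funext hall)
      obtain ⟨j0, hj0⟩ := hj0
      set S2 := ∑ j, (amap τ j) ^ 2 with hS2
      have hS2pos : 0 < S2 :=
        Finset.sum_pos' (fun j _ => sq_nonneg _) ⟨j0, Finset.mem_univ _, by positivity⟩
      set s := (c τ - m) / S2 with hs
      set β : Fin p → ℝ := fun j => -s * amap τ j with hβ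
      refine (iInf_le _ β).trans ?_
      have hval : (∑ i, w i * ell γ r u v τ β i) = c τ - s * S2 := by
        rw [hsum τ β]
        have h6 : ∑ j, β j * amap τ j = -s * S2 := by
          rw [hS2, Finset.mul_sum]
          exact Finset.sum_congr rfl fun j _ => by rw [hβ]; ring
        rw [h6]; ring
      rw [hval]
      apply EReal.coe_le_coe_iff.2
      have h7 : s * S2 = c τ - m := div_mul_cancel₀ _ (ne_of_gt hS2pos)
      linarith
    have hRbot : (⨅ β : Fin p → ℝ, ⨆ τ ∈ Tset,
        ((∑ i, w i * ell γ r u v τ β i : ℝ) : EReal)) = ⊥ := by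
      apply ereal_eq_bot
      intro m
      have hT0 : (0 : Fin p → ℝ) ∉ amap '' Tset := by
        rintro ⟨τ, hτ, h0⟩; exact hS τ hτ h0
      have hDcpt : IsCompact (amap '' Tset) := hTcpt.image hacont
      have hDconv : Convex ℝ (amap '' Tset) := by
        rintro _ ⟨τ1, hτ1, rfl⟩ _ ⟨τ2, hτ2, rfl⟩ a b ha hb hab
        exact ⟨a • τ1 + b • τ2, hTconv hτ1 hτ2 ha hb hab, haaffA τ1 τ2 a b hab⟩
      have hdisj : Disjoint ({(0 : Fin p → ℝ)} : Set (Fin p → ℝ)) (amap '' Tset) :=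
        Set.disjoint_singleton_left.2 hT0
      obtain ⟨f, u', v', hfu, huv, hfv⟩ :=
        geometric_hahn_banach_compact_closed (convex_singleton _) isCompact_singleton
          hDconv hDcpt.isClosed hdisj
      have hu'pos : 0 < u' := by
        have h8 := hfu 0 rfl
        rw [map_zero] at h8
        exact h8
      have hv'pos : 0 < v' := lt_trans hu'pos huv
      obtain ⟨τC, hτC, hmaxC⟩ := hTcpt.exists_isMaxOn hTne hccont.continuousOn
      set C := c τC with hC
      set sbig := max 0 ((C - m) / v') with hsbig
      have hsbig0 : 0 ≤ sbig := le_max_left _ _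
      set β : Fin p → ℝ := fun j => -sbig * f (fun k => if j = k then 1 else 0) with hβ
      refine (iInf_le _ β).trans (iSup₂_le fun τ hτ => ?_)
      have hfa := hfv (amap τ) ⟨τ, hτ, rfl⟩
      have hβa : ∑ j, β j * amap τ j = -sbig * f (amap τ) := by
        rw [clm_rep f (amap τ), Finset.mul_sum]
        exact Finset.sum_congr rfl fun j _ => by rw [hβ]; ring
      apply EReal.coe_le_coe_iff.2
      rw [hsum τ β, hβa]
      have h1 : c τ ≤ C := hmaxC hτ
      have h2 : sbig * v' ≤ sbig * f (amap τ) := mul_le_mul_of_nonneg_left (le_of_lt hfa) hsbig0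
      have h3 : C - m ≤ sbig * v' := by
        have h4 : (C - m) / v' ≤ sbig := le_max_right _ _
        calc C - m = ((C - m) / v') * v' := (div_mul_cancel₀ _ (ne_of_gt hv'pos)).symm
          _ ≤ sbig * v' := mul_le_mul_of_nonneg_right h4 (le_of_lt hv'pos)
      linarith
    rw [hLbot, hRbot]

lemma minimax_lin {n : ℕ} (K Tset : Set (Fin n → ℝ))
    (hKne : K.Nonempty) (hKcpt : IsCompact K) (hKconv : Convex ℝ K)
    (hTne : Tset.Nonempty) (hTcpt : IsCompact Tset) (hTconv : Convex ℝ Tset)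
    (A B : Fin n → ℝ) :
    (⨅ w ∈ K, ⨆ τ ∈ Tset, ((∑ i, w i * (τ i * A i + B i) : ℝ) : EReal)) =
      ⨆ τ ∈ Tset, ⨅ w ∈ K, ((∑ i, w i * (τ i * A i + B i) : ℝ) : EReal) := by
  set g : (Fin n → ℝ) → (Fin n → ℝ) → ℝ := fun w τ => ∑ i, w i * (τ i * A i + B i) with hg
  have hglin : ∀ (w1 w2 : Fin n → ℝ) (a b : ℝ) (τ : Fin n → ℝ),
      g (a • w1 + b • w2) τ = a * g w1 τ + b * g w2 τ := by
    intro w1 w2 a b τ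
    have hterm : ∀ i, (a • w1 + b • w2) i * (τ i * A i + B i)
        = a * (w1 i * (τ i * A i + B i)) + b * (w2 i * (τ i * A i + B i)) := by
      intro i
      simp only [Pi.add_apply, Pi.smul_apply, smul_eq_mul]
      ring
    simp only [hg]
    rw [Finset.sum_congr rfl fun i _ => hterm i, Finset.sum_add_distrib,
      ← Finset.mul_sum, ← Finset.mul_sum]
  refine le_antisymm ?_ (le_iInf₂ fun w hw => iSup₂_le fun τ hτ =>
    (iInf₂_le w hw).trans (le_iSup₂_of_le τ hτ le_rfl))
  by_contra hlt
  push_neg at hlt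
  obtain ⟨q, hq1, hq2⟩ := EReal.exists_between_coe_real hlt
  have hexw : ∀ τ ∈ Tset, ∃ w ∈ K, g w τ < q := by
    intro τ hτ
    have h := lt_of_le_of_lt
      (le_iSup₂ (f := fun τ _ => ⨅ w ∈ K, ((g w τ : ℝ) : EReal)) τ hτ) hq1
    rw [iInf_lt_iff] at h
    obtain ⟨w, hw⟩ := h
    rw [iInf_lt_iff] at hw
    obtain ⟨hwK, hw⟩ := hw
    exact ⟨w, hwK, EReal.coe_lt_coe_iff.1 hw⟩
  have hclaim : ∃ w ∈ K, ∀ τ ∈ Tset, g w τ ≤ q := by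
    by_contra hcl
    push_neg at hcl
    set Z : ↥Tset → Set (Fin n → ℝ) := fun τ => {w | g w ↑τ ≤ q} with hZ
    have hZc : ∀ τ, IsClosed (Z τ) :=
      fun τ => isClosed_le (by simp only [hg]; fun_prop) continuous_const
    have hKZ : K ∩ ⋂ τ, Z τ = ∅ := by
      rw [Set.eq_empty_iff_forall_notMem]
      rintro w ⟨hwK, hwZ⟩
      obtain ⟨τ, hτT, hgt⟩ := hcl w hwK
      exact absurd (Set.mem_iInter.1 hwZ ⟨τ, hτT⟩) (not_le.2 hgt)
    obtain ⟨t, htt⟩ := hKcpt.elim_finite_subfamily_closed Z hZc hKZ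
    rcases t.eq_empty_or_nonempty with rfl | htne
    · simp only [Finset.notMem_empty, Set.iInter_of_empty, Set.iInter_univ, Set.inter_univ] at htt
      exact hKne.ne_empty htt
    have hJne : Nonempty {x // x ∈ t} := ⟨⟨htne.choose, htne.choose_spec⟩⟩
    set L : (Fin n → ℝ) → ({x // x ∈ t} → ℝ) := fun w j => g w (j.1 : Fin n → ℝ) with hL
    have hLcont : Continuous L := continuous_pi fun j => by simp only [hL, hg]; fun_prop
    have hLK_cpt : IsCompact (L '' K) := hKcpt.image hLcont
    have hLK_conv : Convex ℝ (L '' K) := by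
      rintro _ ⟨w1, hw1, rfl⟩ _ ⟨w2, hw2, rfl⟩ a b ha hb hab
      refine ⟨a • w1 + b • w2, hKconv hw1 hw2 ha hb hab, ?_⟩
      funext j
      exact hglin w1 w2 a b _
    set Q : Set ({x // x ∈ t} → ℝ) := {y | ∀ j, y j ≤ q} with hQdef
    have hQc : IsClosed Q := by
      have : Q = ⋂ j, {y : {x // x ∈ t} → ℝ | y j ≤ q} := by
        ext y; simp [hQdef, Set.mem_iInter]
      rw [this]
      exact isClosed_iInter fun j => isClosed_le (continuous_apply j) continuous_const
    have hQconv : Convex ℝ Q := by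
      intro y hy z hz a b ha hb hab
      intro j
      have hy' : y j ≤ q := hy j
      have hz' : z j ≤ q := hz j
      have h1 : a * y j ≤ a * q := mul_le_mul_of_nonneg_left hy' ha
      have h2 : b * z j ≤ b * q := mul_le_mul_of_nonneg_left hz' hb
      have h3 : a * q + b * q = q := by rw [← add_mul, hab, one_mul]
      show a * y j + b * z j ≤ q
      linarith
    have hdisj : Disjoint (L '' K) Q := by
      rw [Set.disjoint_left]
      rintro _ ⟨w, hw, rfl⟩ hQm
      have hmem : w ∈ K ∩ ⋂ τ ∈ t, Z τ := by
        refine ⟨hw, ?_⟩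
        rw [Set.mem_iInter₂]
        intro τ hτ
        exact hQm ⟨τ, hτ⟩
      rw [htt] at hmem
      exact hmem
    obtain ⟨f, u, v, hfu, huv, hfv⟩ :=
      geometric_hahn_banach_compact_closed hLK_conv hLK_cpt hQconv hQc hdisj
    set e : {x // x ∈ t} → ({x // x ∈ t} → ℝ) := fun j k => if j = k then 1 else 0 with he
    have hrep : ∀ y, f y = ∑ j, y j * f (e j) := fun y => clm_rep f y
    have hconstq : (fun _ : {x // x ∈ t} => q) ∈ Q := fun j => le_rfl
    have hlam : ∀ j, f (e j) ≤ 0 := by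
      intro j0
      by_contra hpos
      push_neg at hpos
      have hsv : v < f (fun _ => q) := hfv _ hconstq
      set s := (f (fun _ => q) - v) / f (e j0) with hs
      have hs0 : 0 ≤ s := le_of_lt (div_pos (by linarith) hpos)
      have hyQ : (fun k => q - s * e j0 k) ∈ Q := by
        intro j
        simp only [he]
        split
        · nlinarith
        · simp
      have hv2 := hfv _ hyQ
      have hfy : f (fun k => q - s * e j0 k) = f (fun _ => q) - s * f (e j0) := by
        have hdec : (fun k => q - s * e j0 k) = (fun _ : {x // x ∈ t} => q) - s • e j0 := by
          funext k; simp [Pi.sub_apply, Pi.smul_apply, smul_eq_mul]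
        rw [hdec, map_sub, map_smul, smul_eq_mul]
      rw [hfy] at hv2
      have hcancel : s * f (e j0) = f (fun _ => q) - v := div_mul_cancel₀ _ (ne_of_gt hpos)
      linarith
    set σ := ∑ j, -f (e j) with hσ
    have hσ0 : 0 ≤ σ := Finset.sum_nonneg fun j _ => by linarith [hlam j]
    have hσpos : 0 < σ := by
      rcases hσ0.lt_or_eq with h | h
      · exact h
      · exfalso
        have hall := (Finset.sum_eq_zero_iff_of_nonneg
          (fun j (_ : j ∈ univ) => by linarith [hlam j] : ∀ j ∈ univ, 0 ≤ -f (e j))).1 h.symm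
        obtain ⟨w0, hw0⟩ := hKne
        have h1 : f (L w0) = 0 := by
          rw [hrep]
          apply Finset.sum_eq_zero
          intro j _
          have := hall j (mem_univ j)
          have hfe : f (e j) = 0 := by linarith
          rw [hfe, mul_zero]
        have h2 : f (fun _ : {x // x ∈ t} => q) = 0 := by
          rw [hrep]
          apply Finset.sum_eq_zero
          intro j _
          have := hall j (mem_univ j)
          have hfe : f (e j) = 0 := by linarith
          rw [hfe, mul_zero]
        have h3 := hfu _ ⟨w0, hw0, rfl⟩
        have h4 := hfv _ hconstq
        rw [h1] at h3
        rw [h2] at h4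
        linarith
    set μ : {x // x ∈ t} → ℝ := fun j => -f (e j) / σ with hμ
    have hμ0 : ∀ j, 0 ≤ μ j := fun j => div_nonneg (by linarith [hlam j]) hσ0
    have hμ1 : ∑ j, μ j = 1 := by
      rw [hμ]
      rw [← Finset.sum_div]
      exact div_self (ne_of_gt hσpos)
    set τbar : Fin n → ℝ := ∑ j, μ j • ((j.1 : ↥Tset) : Fin n → ℝ) with hτbar
    have htbarT : τbar ∈ Tset :=
      hTconv.sum_mem (fun j _ => hμ0 j) hμ1 (fun j _ => j.1.2)
    have htbar_i : ∀ i, τbar i = ∑ j, μ j * ((j.1 : ↥Tset) : Fin n → ℝ) i := by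
      intro i
      rw [hτbar]
      rw [Finset.sum_apply]
      simp [Pi.smul_apply, smul_eq_mul]
    have haff : ∀ w, g w τbar = ∑ j, μ j * g w ((j.1 : ↥Tset) : Fin n → ℝ) := by
      intro w
      simp only [hg]
      rw [Finset.sum_congr rfl fun j (_ : j ∈ univ) => Finset.mul_sum _ _ _, Finset.sum_comm]
      apply Finset.sum_congr rfl
      intro i _
      rw [htbar_i i]
      rw [Finset.sum_congr rfl (fun j (_ : j ∈ univ) =>
        (by ring : μ j * (w i * (((j.1 : ↥Tset) : Fin n → ℝ) i * A i + B i))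
          = (μ j * ((j.1 : ↥Tset) : Fin n → ℝ) i) * (w i * A i) + μ j * (w i * B i))),
        Finset.sum_add_distrib, ← Finset.sum_mul, ← Finset.sum_mul, hμ1, one_mul]
      ring
    have hlam_eq : ∀ j, f (e j) = -(μ j * σ) := by
      intro j
      rw [hμ]
      rw [div_mul_cancel₀ _ (ne_of_gt hσpos)]
      ring
    have hkey : ∀ w ∈ K, q < g w τbar := by
      intro w hw
      have h3 := hfu _ ⟨w, hw, rfl⟩
      have h4 := hfv _ hconstq
      rw [hrep] at h3 h4
      have h3' : -(σ * ∑ j, μ j * g w ((j.1 : ↥Tset) : Fin n → ℝ)) < u := by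
        rw [Finset.mul_sum, ← Finset.sum_neg_distrib]
        calc (∑ j, -(σ * (μ j * g w ((j.1 : ↥Tset) : Fin n → ℝ)))) 
            = ∑ j, L w j * f (e j) := Finset.sum_congr rfl fun j _ => by
              rw [hlam_eq j]; simp only [hL]; ring
          _ < u := h3
      have hterm4 : ∀ j : {x // x ∈ t}, q * f (e j) = -(q * σ) * μ j := by
        intro j; rw [hlam_eq j]; ring
      have h4' : v < -(σ * q) := by
        have hsum4 : (∑ j, q * f (e j)) = -(σ * q) := by
          rw [Finset.sum_congr rfl fun j _ => hterm4 j, ← Finset.mul_sum, hμ1]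
          ring
        linarith [h4, hsum4.symm.le, hsum4.le]
      rw [haff w]
      have hσq : σ * q < σ * ∑ j, μ j * g w ((j.1 : ↥Tset) : Fin n → ℝ) := by linarith
      exact lt_of_mul_lt_mul_left hσq hσ0
    obtain ⟨wx, hwx, hlt'⟩ := hexw τbar htbarT
    exact absurd hlt' (not_lt.2 (le_of_lt (hkey wx hwx)))
  obtain ⟨wst, hwst, hws⟩ := hclaim
  have : (⨅ w ∈ K, ⨆ τ ∈ Tset, ((g w τ : ℝ) : EReal)) ≤ (q : EReal) := by
    refine (iInf₂_le wst hwst).trans ?_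
    exact iSup₂_le fun τ hτ => EReal.coe_le_coe_iff.2 (hws τ hτ)
  exact absurd (lt_of_lt_of_le hq2 this) (lt_irrefl _)

/-- minimax interchange (in the extended reals)
`inf_{w∈K} sup_{τ∈T} inf_β Σᵢ wᵢ ℓᵢ = inf_{w∈K} inf_β sup_{τ∈T} Σᵢ wᵢ ℓᵢ
 = inf_β sup_{τ∈T} inf_{w∈K} Σᵢ wᵢ ℓᵢ`. -/
theorem stmt_8 (n p : ℕ) (hn : 1 ≤ n) (hp : 1 ≤ p)
    (γ : ℝ) (hγ0 : 0 < γ) (hγ1 : γ < 1)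
    (r : Fin n → ℝ) (u v : Fin n → Fin p → ℝ)
    (K : Set (Fin n → ℝ)) (hKne : K.Nonempty) (hKcpt : IsCompact K) (hKconv : Convex ℝ K)
    (hKsub : ∀ w ∈ K, (∀ i, 0 ≤ w i) ∧ ∑ i, w i = 1)
    (Tset : Set (Fin n → ℝ)) (hTne : Tset.Nonempty) (hTcpt : IsCompact Tset)
    (hTconv : Convex ℝ Tset) (hTsub : ∀ τ ∈ Tset, ∀ i, 0 ≤ τ i) :
    (⨅ w ∈ K, ⨆ τ ∈ Tset, ⨅ β : Fin p → ℝ,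
        ((∑ i, w i * ell γ r u v τ β i : ℝ) : EReal)) =
      (⨅ w ∈ K, ⨅ β : Fin p → ℝ, ⨆ τ ∈ Tset,
        ((∑ i, w i * ell γ r u v τ β i : ℝ) : EReal)) ∧
    (⨅ w ∈ K, ⨅ β : Fin p → ℝ, ⨆ τ ∈ Tset,
        ((∑ i, w i * ell γ r u v τ β i : ℝ) : EReal)) =
      ⨅ β : Fin p → ℝ, ⨆ τ ∈ Tset, ⨅ w ∈ K,
        ((∑ i, w i * ell γ r u v τ β i : ℝ) : EReal) := by
  constructor
  · exact iInf_congr fun w => iInf_congr fun hw => eq1 γ r u v Tset hTne hTcpt hTconv w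
  · have hswap : (⨅ w ∈ K, ⨅ β : Fin p → ℝ, ⨆ τ ∈ Tset,
        ((∑ i, w i * ell γ r u v τ β i : ℝ) : EReal))
        = ⨅ β : Fin p → ℝ, ⨅ w ∈ K, ⨆ τ ∈ Tset,
          ((∑ i, w i * ell γ r u v τ β i : ℝ) : EReal) := by
      calc (⨅ w ∈ K, ⨅ β : Fin p → ℝ, ⨆ τ ∈ Tset,
            ((∑ i, w i * ell γ r u v τ β i : ℝ) : EReal))
          = ⨅ w, ⨅ β : Fin p → ℝ, ⨅ (_ : w ∈ K), ⨆ τ ∈ Tset,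
            ((∑ i, w i * ell γ r u v τ β i : ℝ) : EReal) := iInf_congr fun w => iInf_comm
        _ = ⨅ β : Fin p → ℝ, ⨅ w, ⨅ (_ : w ∈ K), ⨆ τ ∈ Tset,
            ((∑ i, w i * ell γ r u v τ β i : ℝ) : EReal) := iInf_comm
    rw [hswap]
    refine iInf_congr fun β => ?_
    have hcongr : ∀ (τ w : Fin n → ℝ), (∑ i, w i * ell γ r u v τ β i)
        = ∑ i, w i * (τ i * (r i + ∑ j, β j * v i j) + (1 - γ) * ∑ j, β j * u i j) :=
      fun τ w => Finset.sum_congr rfl fun i _ => by rw [ell_eq]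
    simp only [hcongr]
    exact minimax_lin K Tset hKne hKcpt hKconv hTne hTcpt hTconv
      (fun i => r i + ∑ j, β j * v i j) (fun i => (1 - γ) * ∑ j, β j * u i j)
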